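/- Let H be a Q-graded Hopf quasigroup and M, N two Q-graded H-quasimodules. Then M⊗N = {M_q⊗N_q}_{q∈Q} with the diagonal action h·(m⊗n) = h_{(1)}·m ⊗ h_{(2)}·n is again a Q-graded H-quasimodule. -/

import Mathlib

open TensorProduct

universe u v w

/-- A quasigroup: a set with product, identity `e`, and two-sided inverses satisfying
`p⁻¹(pq) = q` and `(qp)p⁻¹ = q`. -/
structure QuasigroupStruct (Q : Type u) where
  mul : Q → Q → Q
  one : Q
  inv : Q → Q
  mul_one : ∀ p, mul p one = p
  one_mul : ∀ p, mul one p = p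
  inv_mul_cancel : ∀ p q, mul (inv p) (mul p q) = q
  mul_inv_cancel : ∀ p q, mul (mul q p) (inv p) = q

namespace QuasigroupStruct

variable {Q : Type u} (G : QuasigroupStruct Q)

lemma inv_mul_self (p : Q) : G.mul (G.inv p) p = G.one := by
  have h := G.inv_mul_cancel p G.one
  rwa [G.mul_one] at h

lemma mul_inv_self (p : Q) : G.mul p (G.inv p) = G.one := by
  have h := G.mul_inv_cancel p G.one
  rwa [G.one_mul] at h

lemma inv_inv (p : Q) : G.inv (G.inv p) = p := by
  have h := G.inv_mul_cancel (G.inv p) p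
  rw [G.inv_mul_self p] at h
  rwa [G.mul_one] at h

lemma mul_inv_cancel_left (p q : Q) : G.mul p (G.mul (G.inv p) q) = q := by
  have h := G.inv_mul_cancel (G.inv p) q
  rwa [G.inv_inv] at h

lemma inv_mul_cancel_right (p q : Q) : G.mul (G.mul q (G.inv p)) p = q := by
  have h := G.mul_inv_cancel (G.inv p) q
  rwa [G.inv_inv] at h

lemma mul_inv_rev (p q : Q) : G.inv (G.mul p q) = G.mul (G.inv q) (G.inv p) := by
  have h1 : G.mul q (G.inv (G.mul p q)) = G.inv p := by
    have h := G.mul_inv_cancel (G.mul p q) (G.inv p)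
    rwa [G.inv_mul_cancel p q] at h
  calc G.inv (G.mul p q)
      = G.mul (G.inv q) (G.mul q (G.inv (G.mul p q))) := (G.inv_mul_cancel q _).symm
    _ = G.mul (G.inv q) (G.inv p) := by rw [h1]

lemma inv_one : G.inv G.one = G.one := by
  have h := G.inv_mul_cancel G.one G.one
  rwa [G.one_mul, G.mul_one] at h

end QuasigroupStruct

/-- Transport along an equality of grades, as a linear map. -/
def gcl {Q : Type u} {H : Q → Type w} {k : Type v} [CommSemiring k]
    [∀ p, AddCommMonoid (H p)] [∀ p, Module k (H p)] {p q : Q} (e : p = q) :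
    H p →ₗ[k] H q := by subst e; exact LinearMap.id

/-- A `Q`-graded Hopf quasigroup: a family of coassociative counital coalgebras `H p`
with a (not necessarily associative) graded multiplication, unit and antipode family,
such that the multiplications and the unit are coalgebra maps and the antipode
satisfies the Hopf quasigroup axioms. -/
structure GradedHopfQuasigroup (k : Type v) [CommRing k] {Q : Type u} (G : QuasigroupStruct Q)
    (H : Q → Type w) [∀ p, AddCommGroup (H p)] [∀ p, Module k (H p)]
    [∀ p, Coalgebra k (H p)] where
  mul : ∀ p q, H p →ₗ[k] H q →ₗ[k] H (G.mul p q)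
  one : H G.one
  antipode : ∀ p, H p →ₗ[k] H (G.inv p)
  mul_one' : ∀ (p : Q) (h : H p), gcl (k := k) (G.mul_one p) ((mul p G.one h) one) = h
  one_mul' : ∀ (p : Q) (h : H p), gcl (k := k) (G.one_mul p) ((mul G.one p one) h) = h
  comul_mul : ∀ (p q : Q) (h : H p) (g : H q),
    Coalgebra.comul (R := k) ((mul p q h) g) =
      (TensorProduct.map (TensorProduct.lift (mul p q)) (TensorProduct.lift (mul p q)))
        ((TensorProduct.tensorTensorTensorComm k (H p) (H p) (H q) (H q))
          (Coalgebra.comul h ⊗ₜ[k] Coalgebra.comul g))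
  counit_mul : ∀ (p q : Q) (h : H p) (g : H q),
    Coalgebra.counit (R := k) ((mul p q h) g) =
      Coalgebra.counit (R := k) h * Coalgebra.counit (R := k) g
  comul_one : Coalgebra.comul (R := k) one = one ⊗ₜ[k] one
  counit_one : Coalgebra.counit (R := k) one = 1
  /-- `S (h₁) (h₂ g) = ε(h) g` -/
  antipode_mul_left : ∀ (p q : Q) (h : H p) (g : H q),
    TensorProduct.lift
      (((mul (G.inv p) (G.mul p q)).comp (antipode p)).compl₂ ((mul p q).flip g))
      (Coalgebra.comul h)
      = gcl (k := k) (G.inv_mul_cancel p q).symm (Coalgebra.counit (R := k) h • g)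
  /-- `h₁ (S (h₂) g) = ε(h) g` -/
  antipode_mul_left' : ∀ (p q : Q) (h : H p) (g : H q),
    TensorProduct.lift
      ((mul p (G.mul (G.inv p) q)).compl₂ (((mul (G.inv p) q).flip g).comp (antipode p)))
      (Coalgebra.comul h)
      = gcl (k := k) (G.mul_inv_cancel_left p q).symm (Coalgebra.counit (R := k) h • g)
  /-- `(g S (h₁)) h₂ = ε(h) g` -/
  antipode_mul_right : ∀ (p q : Q) (h : H p) (g : H q),
    TensorProduct.lift
      ((mul (G.mul q (G.inv p)) p).comp ((mul q (G.inv p) g).comp (antipode p)))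
      (Coalgebra.comul h)
      = gcl (k := k) (G.inv_mul_cancel_right p q).symm (Coalgebra.counit (R := k) h • g)
  /-- `(g h₁) S (h₂) = ε(h) g` -/
  antipode_mul_right' : ∀ (p q : Q) (h : H p) (g : H q),
    TensorProduct.lift
      (((mul (G.mul q p) (G.inv p)).comp (mul q p g)).compl₂ (antipode p))
      (Coalgebra.comul h)
      = gcl (k := k) (G.mul_inv_cancel p q).symm (Coalgebra.counit (R := k) h • g)

variable {k : Type v} [Field k] {Q : Type u} {G : QuasigroupStruct Q}
  {H : Q → Type w} [∀ p, AddCommGroup (H p)] [∀ p, Module k (H p)]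
  [∀ p, Coalgebra k (H p)]

/-- A `Q`-graded `H`-quasimodule. -/
structure GradedQuasimodule (A : GradedHopfQuasigroup k G H) (M : Q → Type w)
    [∀ q, AddCommGroup (M q)] [∀ q, Module k (M q)] where
  act : ∀ p q, H p →ₗ[k] M q →ₗ[k] M (G.mul p q)
  one_act : ∀ (q : Q) (m : M q), gcl (k := k) (G.one_mul q) ((act G.one q A.one) m) = m
  /-- `h₁ · (S_p(h₂) · m) = ε_p(h) m` -/
  quasi_left : ∀ (p q : Q) (h : H p) (m : M q),
    TensorProduct.lift ((act p (G.mul (G.inv p) q)).compl₂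
        (((act (G.inv p) q).flip m).comp (A.antipode p))) (Coalgebra.comul h)
      = gcl (k := k) (G.mul_inv_cancel_left p q).symm (Coalgebra.counit (R := k) h • m)
  /-- `S_p(h₁) · (h₂ · m) = ε_p(h) m` -/
  quasi_left' : ∀ (p q : Q) (h : H p) (m : M q),
    TensorProduct.lift (((act (G.inv p) (G.mul p q)).comp (A.antipode p)).compl₂
        ((act p q).flip m)) (Coalgebra.comul h)
      = gcl (k := k) (G.inv_mul_cancel p q).symm (Coalgebra.counit (R := k) h • m)

section GclLemmas

variable {Q : Type u} {k : Type v} [CommSemiring k]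

section Generic
variable {F : Q → Type w} [∀ p, AddCommMonoid (F p)] [∀ p, Module k (F p)]

lemma gcl_rfl {p : Q} (x : F p) : gcl (k := k) (rfl : p = p) x = x := rfl

lemma gcl_gcl {p q r : Q} (e1 : p = q) (e2 : q = r) (x : F p) :
    gcl (k := k) e2 (gcl (k := k) e1 x) = gcl (k := k) (e1.trans e2) x := by
  subst e1; subst e2; rfl

lemma gcl_cancel {p q : Q} (e : p = q) (x : F p) (y : F q) :
    gcl (k := k) e x = y ↔ x = gcl (k := k) e.symm y := by
  subst e; exact Iff.rfl

end Generic

section Coalg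
variable {H : Q → Type w} [∀ p, AddCommMonoid (H p)] [∀ p, Module k (H p)]
  [∀ p, Coalgebra k (H p)]

lemma comul_gcl {p q : Q} (e : p = q) (x : H p) :
    Coalgebra.comul (R := k) (gcl (k := k) e x)
      = TensorProduct.map (gcl (k := k) e) (gcl (k := k) e) (Coalgebra.comul x) := by
  subst e; rw [show (gcl (k := k) (rfl : p = p) : H p →ₗ[k] H p) = LinearMap.id from rfl]
  rw [TensorProduct.map_id]; rfl

lemma counit_gcl {p q : Q} (e : p = q) (x : H p) :
    Coalgebra.counit (R := k) (gcl (k := k) e x) = Coalgebra.counit (R := k) x := by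
  subst e; rfl

end Coalg
end GclLemmas
lemma gcl_symm_gcl {Q : Type u} {k : Type v} [CommSemiring k]
    {F : Q → Type w} [∀ p, AddCommMonoid (F p)] [∀ p, Module k (F p)]
    {p q : Q} (e : p = q) (x : F p) :
    gcl (k := k) e.symm (gcl (k := k) e x) = x := by
  subst e; rfl
lemma repr_counit_left_smul {k : Type v} [CommSemiring k] {A : Type w}
    [AddCommMonoid A] [Module k A] [Coalgebra k A] {a : A} (σ : Coalgebra.Repr k a (A × A)) :
    ∑ i ∈ σ.index, Coalgebra.counit (R := k) (σ.left i) • σ.right i = a := by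
  have h := congrArg (TensorProduct.lid k A) (Coalgebra.sum_counit_tmul_eq (R := k) σ)
  rw [map_sum] at h
  simp only [TensorProduct.lid_tmul, one_smul] at h
  exact h

lemma repr_counit_right_smul {k : Type v} [CommSemiring k] {A : Type w}
    [AddCommMonoid A] [Module k A] [Coalgebra k A] {a : A} (σ : Coalgebra.Repr k a (A × A)) :
    ∑ i ∈ σ.index, Coalgebra.counit (R := k) (σ.right i) • σ.left i = a := by
  have h := congrArg (TensorProduct.rid k A) (Coalgebra.sum_tmul_counit_eq (R := k) σ)
  rw [map_sum] at h
  simp only [TensorProduct.rid_tmul, one_smul] at h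
  exact h

section HopfSums

variable (A : GradedHopfQuasigroup k G H)

/-- `∑ S(h₁)(h₂ g) = ε(h) ĝ` in summed form. -/
lemma aml_sum (p q : Q) (h : H p) (ρ : Coalgebra.Repr k h (H p × H p)) (g : H q) :
    ∑ i ∈ ρ.index, A.mul (G.inv p) (G.mul p q) (A.antipode p (ρ.left i))
        (A.mul p q (ρ.right i) g)
      = Coalgebra.counit (R := k) h • gcl (k := k) (G.inv_mul_cancel p q).symm g := by
  have := A.antipode_mul_left p q h g
  rw [← ρ.eq] at this
  simpa [map_sum, map_smul] using this

/-- `∑ (g h₁) S(h₂) = ε(h) ĝ` in summed form. -/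
lemma amr'_sum (p q : Q) (h : H p) (ρ : Coalgebra.Repr k h (H p × H p)) (g : H q) :
    ∑ i ∈ ρ.index, A.mul (G.mul q p) (G.inv p) (A.mul q p g (ρ.left i))
        (A.antipode p (ρ.right i))
      = Coalgebra.counit (R := k) h • gcl (k := k) (G.mul_inv_cancel p q).symm g := by
  have := A.antipode_mul_right' p q h g
  rw [← ρ.eq] at this
  simpa [map_sum, map_smul] using this

lemma one_mul_eq (p : Q) (h : H p) :
    A.mul G.one p A.one h = gcl (k := k) (G.one_mul p).symm h := by
  have := A.one_mul' p h
  rwa [gcl_cancel] at this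

lemma mul_one_eq (p : Q) (h : H p) :
    A.mul p G.one h A.one = gcl (k := k) (G.mul_one p).symm h := by
  have := A.mul_one' p h
  rwa [gcl_cancel] at this

lemma mul_gcl_left {p p' q : Q} (e : p = p') (h : H p) (g : H q) :
    A.mul p' q (gcl (k := k) e h) g
      = gcl (k := k) (by rw [e]) (A.mul p q h g) := by
  subst e; rfl

lemma mul_gcl_right {p q q' : Q} (e : q = q') (h : H p) (g : H q) :
    A.mul p q' h (gcl (k := k) e g)
      = gcl (k := k) (by rw [e]) (A.mul p q h g) := by
  subst e; rfl

end HopfSums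
section HopfSums2

variable (A : GradedHopfQuasigroup k G H)

/-- `∑ h₁ S(h₂) = ε(h) 1̂` -/
lemma mul_antipode_sum (p : Q) (h : H p) (ρ : Coalgebra.Repr k h (H p × H p)) :
    ∑ i ∈ ρ.index, A.mul p (G.inv p) (ρ.left i) (A.antipode p (ρ.right i))
      = Coalgebra.counit (R := k) h • gcl (k := k) (G.mul_inv_self p).symm A.one := by
  have h1 := amr'_sum A p G.one h ρ A.one
  have h2 : ∀ i ∈ ρ.index,
      A.mul (G.mul G.one p) (G.inv p) (A.mul G.one p A.one (ρ.left i))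
          (A.antipode p (ρ.right i))
        = gcl (k := k) (by rw [G.one_mul]) 
            (A.mul p (G.inv p) (ρ.left i) (A.antipode p (ρ.right i))) := by
    intro i _
    rw [one_mul_eq, mul_gcl_left]
  rw [Finset.sum_congr rfl h2, ← map_sum, gcl_cancel, map_smul, gcl_gcl] at h1
  exact h1

lemma mul_gcl_one (p : Q) (x : H (G.inv p)) :
    A.mul (G.inv p) (G.mul p (G.inv p)) x (gcl (k := k) (G.mul_inv_self p).symm A.one)
      = gcl (k := k) (G.inv_mul_cancel p (G.inv p)).symm x := by
  rw [mul_gcl_right, mul_one_eq, gcl_gcl]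

open TensorProduct in
lemma comul_mul_sum (p q : Q) (h : H p) (g : H q)
    (ρ : Coalgebra.Repr k h (H p × H p)) (σ : Coalgebra.Repr k g (H q × H q)) :
    Coalgebra.comul (R := k) (A.mul p q h g)
      = ∑ i ∈ ρ.index, ∑ j ∈ σ.index,
          A.mul p q (ρ.left i) (σ.left j) ⊗ₜ[k] A.mul p q (ρ.right i) (σ.right j) := by
  have := A.comul_mul p q h g
  rw [← ρ.eq, ← σ.eq] at this
  rw [Finset.sum_comm]
  simpa [TensorProduct.sum_tmul, TensorProduct.tmul_sum, map_sum,
    TensorProduct.tensorTensorTensorComm_tmul] using this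

end HopfSums2
section QMSums

variable {A : GradedHopfQuasigroup k G H} {Mf : Q → Type w}
  [∀ q, AddCommGroup (Mf q)] [∀ q, Module k (Mf q)]
  (P : GradedQuasimodule A Mf)

/-- `∑ h₁ · (S(h₂) · m) = ε(h) m̂` -/
lemma ql_sum (p q : Q) (h : H p) (ρ : Coalgebra.Repr k h (H p × H p)) (m : Mf q) :
    ∑ i ∈ ρ.index, P.act p (G.mul (G.inv p) q) (ρ.left i)
        (P.act (G.inv p) q (A.antipode p (ρ.right i)) m)
      = Coalgebra.counit (R := k) h • gcl (k := k) (G.mul_inv_cancel_left p q).symm m := by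
  have := P.quasi_left p q h m
  rw [← ρ.eq] at this
  simpa [map_sum, map_smul] using this

/-- `∑ S(h₁) · (h₂ · m) = ε(h) m̂` -/
lemma ql'_sum (p q : Q) (h : H p) (ρ : Coalgebra.Repr k h (H p × H p)) (m : Mf q) :
    ∑ i ∈ ρ.index, P.act (G.inv p) (G.mul p q) (A.antipode p (ρ.left i))
        (P.act p q (ρ.right i) m)
      = Coalgebra.counit (R := k) h • gcl (k := k) (G.inv_mul_cancel p q).symm m := by
  have := P.quasi_left' p q h m
  rw [← ρ.eq] at this
  simpa [map_sum, map_smul] using this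

end QMSums
noncomputable section Anticomul

open TensorProduct

variable (A : GradedHopfQuasigroup k G H)

/-- The 5-linear expression `((x₁⊗x₂)⊗((x₃⊗x₄)⊗x₅)) ↦ Σ S(x₂)(x₃·(S x₅)₍₁₎) ⊗ S(x₁)(x₄·(S x₅)₍₂₎)`. -/
def Emap (p : Q) :
    (H p ⊗[k] H p) ⊗[k] ((H p ⊗[k] H p) ⊗[k] H p) →ₗ[k]
      H (G.mul (G.inv p) (G.mul p (G.inv p))) ⊗[k] H (G.mul (G.inv p) (G.mul p (G.inv p))) :=
  (TensorProduct.map (TensorProduct.lift (A.mul (G.inv p) (G.mul p (G.inv p))))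
      (TensorProduct.lift (A.mul (G.inv p) (G.mul p (G.inv p))))) ∘ₗ
    (TensorProduct.tensorTensorTensorComm k (H (G.inv p)) (H (G.inv p))
      (H (G.mul p (G.inv p))) (H (G.mul p (G.inv p)))).toLinearMap ∘ₗ
    (TensorProduct.map
      ((TensorProduct.comm k (H (G.inv p)) (H (G.inv p))).toLinearMap ∘ₗ
        TensorProduct.map (A.antipode p) (A.antipode p))
      ((TensorProduct.map (TensorProduct.lift (A.mul p (G.inv p)))
          (TensorProduct.lift (A.mul p (G.inv p)))) ∘ₗ
        (TensorProduct.tensorTensorTensorComm k (H p) (H p)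
          (H (G.inv p)) (H (G.inv p))).toLinearMap ∘ₗ
        (LinearMap.lTensor (H p ⊗[k] H p)
          ((Coalgebra.comul (R := k)) ∘ₗ (A.antipode p)))))

lemma Emap_tmul (p : Q) (x₁ x₂ x₃ x₄ x₅ : H p)
    (δ : Coalgebra.Repr k (A.antipode p x₅) (H (G.inv p) × H (G.inv p))) :
    Emap A p ((x₁ ⊗ₜ[k] x₂) ⊗ₜ[k] ((x₃ ⊗ₜ[k] x₄) ⊗ₜ[k] x₅))
      = ∑ n ∈ δ.index,
          A.mul (G.inv p) (G.mul p (G.inv p)) (A.antipode p x₂)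
              (A.mul p (G.inv p) x₃ (δ.left n))
            ⊗ₜ[k]
          A.mul (G.inv p) (G.mul p (G.inv p)) (A.antipode p x₁)
              (A.mul p (G.inv p) x₄ (δ.right n)) := by
  have hδ : (Coalgebra.comul (R := k)) (A.antipode p x₅)
      = ∑ n ∈ δ.index, δ.left n ⊗ₜ[k] δ.right n := δ.eq.symm
  simp only [Emap, LinearMap.comp_apply, TensorProduct.map_tmul,
    LinearMap.lTensor_tmul, LinearMap.comp_apply, hδ]
  simp [TensorProduct.tmul_sum, TensorProduct.sum_tmul, map_sum,
    TensorProduct.tensorTensorTensorComm_tmul, TensorProduct.comm_tmul]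
end Anticomul
noncomputable section Bridge

open TensorProduct Coalgebra

variable {p : Q}

/-- Generalized coassociativity: the 5-fold comultiplication along the tree
`(((1,(2,3)),4),5)` equals the one along the tree `((1,2),((3,4),5))`. -/
lemma bridge5 (h : H p) (ρ : Coalgebra.Repr k h (H p × H p))
    (α : ∀ i, Coalgebra.Repr k (ρ.left i) (H p × H p)) (β : ∀ i, Coalgebra.Repr k (ρ.right i) (H p × H p))
    (π : ∀ i j, Coalgebra.Repr k ((α i).left j) (H p × H p))
    (ψ : ∀ i j, Coalgebra.Repr k ((α i).right j) (H p × H p))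
    (ξ : ∀ i j n, Coalgebra.Repr k ((π i j).right n) (H p × H p))
    (γ : ∀ i l, Coalgebra.Repr k ((β i).left l) (H p × H p)) :
    ∑ i ∈ ρ.index, ∑ j ∈ (α i).index, ∑ n ∈ (π i j).index, ∑ m ∈ (ξ i j n).index,
        ((π i j).left n ⊗ₜ[k] (ξ i j n).left m) ⊗ₜ[k]
          (((ξ i j n).right m ⊗ₜ[k] (α i).right j) ⊗ₜ[k] ρ.right i)
      = ∑ i ∈ ρ.index, ∑ j ∈ (α i).index, ∑ l ∈ (β i).index, ∑ m ∈ (γ i l).index,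
        ((α i).left j ⊗ₜ[k] (α i).right j) ⊗ₜ[k]
          (((γ i l).left m ⊗ₜ[k] (γ i l).right m) ⊗ₜ[k] (β i).right l) := by
  classical
  set υ : ∀ i j n, Coalgebra.Repr k ((π i j).left n) (H p × H p) :=
    fun i j n => Coalgebra.Repr.arbitrary k _ with hυ
  -- step 1 : V'form = V₃form
  have step1 :
      (∑ i ∈ ρ.index, ∑ j ∈ (α i).index, ∑ n ∈ (π i j).index, ∑ m ∈ (ξ i j n).index,
        ((π i j).left n ⊗ₜ[k] (ξ i j n).left m) ⊗ₜ[k]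
          (((ξ i j n).right m ⊗ₜ[k] (α i).right j) ⊗ₜ[k] ρ.right i))
      = ∑ i ∈ ρ.index, ∑ j ∈ (α i).index, ∑ n ∈ (π i j).index, ∑ r ∈ (υ i j n).index,
        ((υ i j n).left r ⊗ₜ[k] (υ i j n).right r) ⊗ₜ[k]
          (((π i j).right n ⊗ₜ[k] (α i).right j) ⊗ₜ[k] ρ.right i) := by
    refine Finset.sum_congr rfl fun i _ => Finset.sum_congr rfl fun j _ => ?_
    have e := Coalgebra.sum_tmul_tmul_eq (π i j) (υ i j) (ξ i j)
    have key := congrArg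
      ((LinearMap.lTensor (H p ⊗[k] H p)
          (((TensorProduct.mk k (H p ⊗[k] H p) (H p)).flip (ρ.right i)) ∘ₗ
            ((TensorProduct.mk k (H p) (H p)).flip ((α i).right j)))) ∘ₗ
        (TensorProduct.assoc k (H p) (H p) (H p)).symm.toLinearMap) e
    simp only [map_sum, LinearMap.comp_apply, LinearEquiv.coe_coe,
      TensorProduct.assoc_symm_tmul, LinearMap.lTensor_tmul,
      TensorProduct.mk_apply, LinearMap.flip_apply] at key
    exact key.symm
  -- step 2 : V₃form = V₄form
  have step2 :
      (∑ i ∈ ρ.index, ∑ j ∈ (α i).index, ∑ n ∈ (π i j).index, ∑ r ∈ (υ i j n).index,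
        ((υ i j n).left r ⊗ₜ[k] (υ i j n).right r) ⊗ₜ[k]
          (((π i j).right n ⊗ₜ[k] (α i).right j) ⊗ₜ[k] ρ.right i))
      = ∑ i ∈ ρ.index, ∑ j ∈ (α i).index, ∑ n ∈ (π i j).index, ∑ m ∈ (ψ i j).index,
        ((π i j).left n ⊗ₜ[k] (π i j).right n) ⊗ₜ[k]
          (((ψ i j).left m ⊗ₜ[k] (ψ i j).right m) ⊗ₜ[k] ρ.right i) := by
    refine Finset.sum_congr rfl fun i _ => ?_
    have e := Coalgebra.sum_tmul_tmul_eq (α i) (π i) (ψ i)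
    have key := congrArg
      (TensorProduct.map (Coalgebra.comul (R := k))
        ((TensorProduct.mk k (H p ⊗[k] H p) (H p)).flip (ρ.right i))) e
    simp only [map_sum, TensorProduct.map_tmul,
      TensorProduct.mk_apply, LinearMap.flip_apply] at key
    calc ∑ j ∈ (α i).index, ∑ n ∈ (π i j).index, ∑ r ∈ (υ i j n).index,
          ((υ i j n).left r ⊗ₜ[k] (υ i j n).right r) ⊗ₜ[k]
            (((π i j).right n ⊗ₜ[k] (α i).right j) ⊗ₜ[k] ρ.right i)
        = ∑ j ∈ (α i).index, ∑ n ∈ (π i j).index,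
            (Coalgebra.comul (R := k) ((π i j).left n)) ⊗ₜ[k]
              (((π i j).right n ⊗ₜ[k] (α i).right j) ⊗ₜ[k] ρ.right i) := by
          refine Finset.sum_congr rfl fun j _ => Finset.sum_congr rfl fun n _ => ?_
          rw [← (υ i j n).eq, TensorProduct.sum_tmul]
      _ = ∑ j ∈ (α i).index, ∑ m ∈ (ψ i j).index,
            (Coalgebra.comul (R := k) ((α i).left j)) ⊗ₜ[k]
              (((ψ i j).left m ⊗ₜ[k] (ψ i j).right m) ⊗ₜ[k] ρ.right i) := key
      _ = _ := by
          refine Finset.sum_congr rfl fun j _ => ?_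
          rw [Finset.sum_comm]
          refine Finset.sum_congr rfl fun n _ => ?_
          rw [← (π i j).eq, TensorProduct.sum_tmul]
  -- step 3 : V₄form = Tform
  have step3 :
      (∑ i ∈ ρ.index, ∑ j ∈ (α i).index, ∑ n ∈ (π i j).index, ∑ m ∈ (ψ i j).index,
        ((π i j).left n ⊗ₜ[k] (π i j).right n) ⊗ₜ[k]
          (((ψ i j).left m ⊗ₜ[k] (ψ i j).right m) ⊗ₜ[k] ρ.right i))
      = ∑ i ∈ ρ.index, ∑ j ∈ (α i).index, ∑ l ∈ (β i).index, ∑ m ∈ (γ i l).index,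
        ((α i).left j ⊗ₜ[k] (α i).right j) ⊗ₜ[k]
          (((γ i l).left m ⊗ₜ[k] (γ i l).right m) ⊗ₜ[k] (β i).right l) := by
    have e := Coalgebra.sum_tmul_tmul_eq ρ α β
    have key := congrArg
      (TensorProduct.map (Coalgebra.comul (R := k))
        (TensorProduct.map (Coalgebra.comul (R := k)) (LinearMap.id))) e
    simp only [map_sum, TensorProduct.map_tmul, LinearMap.id_apply] at key
    calc ∑ i ∈ ρ.index, ∑ j ∈ (α i).index, ∑ n ∈ (π i j).index, ∑ m ∈ (ψ i j).index,
          ((π i j).left n ⊗ₜ[k] (π i j).right n) ⊗ₜ[k]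
            (((ψ i j).left m ⊗ₜ[k] (ψ i j).right m) ⊗ₜ[k] ρ.right i)
        = ∑ i ∈ ρ.index, ∑ j ∈ (α i).index,
            (Coalgebra.comul (R := k) ((α i).left j)) ⊗ₜ[k]
              ((Coalgebra.comul (R := k) ((α i).right j)) ⊗ₜ[k] ρ.right i) := by
          refine Finset.sum_congr rfl fun i _ => Finset.sum_congr rfl fun j _ => ?_
          rw [← (π i j).eq, ← (ψ i j).eq]
          simp only [TensorProduct.sum_tmul, TensorProduct.tmul_sum]
          exact Finset.sum_comm
      _ = ∑ i ∈ ρ.index, ∑ l ∈ (β i).index,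
            (Coalgebra.comul (R := k) (ρ.left i)) ⊗ₜ[k]
              ((Coalgebra.comul (R := k) ((β i).left l)) ⊗ₜ[k] (β i).right l) := key
      _ = _ := by
          refine Finset.sum_congr rfl fun i _ => ?_
          rw [Finset.sum_comm]
          refine Finset.sum_congr rfl fun l _ => ?_
          rw [← (α i).eq, ← (γ i l).eq]
          simp only [TensorProduct.sum_tmul, TensorProduct.tmul_sum]
          exact Finset.sum_comm
  exact (step1.trans step2).trans step3

end Bridge
noncomputable section AnticomulMain

open TensorProduct Coalgebra

variable (A : GradedHopfQuasigroup k G H)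

lemma gcl_symm_comp {p q : Q} (e : p = q) :
    (gcl (k := k) (H := H) e.symm).comp (gcl (k := k) e) = LinearMap.id := by
  subst e; rfl

/-- The antipode of a graded Hopf quasigroup is anticomultiplicative. -/
lemma comul_antipode (p : Q) (h : H p) :
    Coalgebra.comul (R := k) (A.antipode p h)
      = TensorProduct.comm k (H (G.inv p)) (H (G.inv p))
          (TensorProduct.map (A.antipode p) (A.antipode p) (Coalgebra.comul h)) := by
  classical
  set ρ := Coalgebra.Repr.arbitrary k h with hρ
  set α : ∀ i, Coalgebra.Repr k (ρ.left i) (H p × H p) :=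
    fun i => Coalgebra.Repr.arbitrary k _ with hα
  set β : ∀ i, Coalgebra.Repr k (ρ.right i) (H p × H p) :=
    fun i => Coalgebra.Repr.arbitrary k _ with hβ
  set π : ∀ i j, Coalgebra.Repr k ((α i).left j) (H p × H p) :=
    fun i j => Coalgebra.Repr.arbitrary k _ with hπ
  set ψ : ∀ i j, Coalgebra.Repr k ((α i).right j) (H p × H p) :=
    fun i j => Coalgebra.Repr.arbitrary k _ with hψ
  set ξ : ∀ i j n, Coalgebra.Repr k ((π i j).right n) (H p × H p) :=
    fun i j n => Coalgebra.Repr.arbitrary k _ with hξ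
  set γ : ∀ i l, Coalgebra.Repr k ((β i).left l) (H p × H p) :=
    fun i l => Coalgebra.Repr.arbitrary k _ with hγ
  set δ : ∀ i, Coalgebra.Repr k (A.antipode p (ρ.right i)) (H (G.inv p) × H (G.inv p)) :=
    fun i => Coalgebra.Repr.arbitrary k _ with hδ
  set δT : ∀ i l, Coalgebra.Repr k (A.antipode p ((β i).right l)) (H (G.inv p) × H (G.inv p)) :=
    fun i l => Coalgebra.Repr.arbitrary k _ with hδT
  have key := congrArg (Emap A p) (bridge5 h ρ α β π ψ ξ γ)
  simp only [map_sum] at key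
  have lhs_eval :
      (∑ i ∈ ρ.index, ∑ j ∈ (α i).index, ∑ n ∈ (π i j).index, ∑ m ∈ (ξ i j n).index,
        Emap A p (((π i j).left n ⊗ₜ[k] (ξ i j n).left m) ⊗ₜ[k]
          (((ξ i j n).right m ⊗ₜ[k] (α i).right j) ⊗ₜ[k] ρ.right i)))
      = ∑ i ∈ ρ.index, ∑ j ∈ (α i).index, ∑ n ∈ (π i j).index, ∑ m ∈ (ξ i j n).index,
          ∑ r ∈ (δ i).index,
          A.mul (G.inv p) (G.mul p (G.inv p)) (A.antipode p ((ξ i j n).left m))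
              (A.mul p (G.inv p) ((ξ i j n).right m) ((δ i).left r))
            ⊗ₜ[k]
          A.mul (G.inv p) (G.mul p (G.inv p)) (A.antipode p ((π i j).left n))
              (A.mul p (G.inv p) ((α i).right j) ((δ i).right r)) := by
    exact Finset.sum_congr rfl fun i _ => Finset.sum_congr rfl fun j _ =>
      Finset.sum_congr rfl fun n _ => Finset.sum_congr rfl fun m _ =>
        Emap_tmul A p _ _ _ _ _ (δ i)
  have rhs_eval :
      (∑ i ∈ ρ.index, ∑ j ∈ (α i).index, ∑ l ∈ (β i).index, ∑ m ∈ (γ i l).index,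
        Emap A p (((α i).left j ⊗ₜ[k] (α i).right j) ⊗ₜ[k]
          (((γ i l).left m ⊗ₜ[k] (γ i l).right m) ⊗ₜ[k] (β i).right l)))
      = ∑ i ∈ ρ.index, ∑ j ∈ (α i).index, ∑ l ∈ (β i).index, ∑ m ∈ (γ i l).index,
          ∑ r ∈ (δT i l).index,
          A.mul (G.inv p) (G.mul p (G.inv p)) (A.antipode p ((α i).right j))
              (A.mul p (G.inv p) ((γ i l).left m) ((δT i l).left r))
            ⊗ₜ[k]
          A.mul (G.inv p) (G.mul p (G.inv p)) (A.antipode p ((α i).left j))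
              (A.mul p (G.inv p) ((γ i l).right m) ((δT i l).right r)) := by
    exact Finset.sum_congr rfl fun i _ => Finset.sum_congr rfl fun j _ =>
      Finset.sum_congr rfl fun l _ => Finset.sum_congr rfl fun m _ =>
        Emap_tmul A p _ _ _ _ _ (δT i l)
  rw [lhs_eval, rhs_eval] at key
  -- Direction 1: the left-hand side collapses to `(gcl ⊗ gcl) Δ(S h)`.
  have dir1 :
      (∑ i ∈ ρ.index, ∑ j ∈ (α i).index, ∑ n ∈ (π i j).index, ∑ m ∈ (ξ i j n).index,
          ∑ r ∈ (δ i).index,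
          A.mul (G.inv p) (G.mul p (G.inv p)) (A.antipode p ((ξ i j n).left m))
              (A.mul p (G.inv p) ((ξ i j n).right m) ((δ i).left r))
            ⊗ₜ[k]
          A.mul (G.inv p) (G.mul p (G.inv p)) (A.antipode p ((π i j).left n))
              (A.mul p (G.inv p) ((α i).right j) ((δ i).right r)))
      = TensorProduct.map (gcl (k := k) (G.inv_mul_cancel p (G.inv p)).symm)
          (gcl (k := k) (G.inv_mul_cancel p (G.inv p)).symm)
          (Coalgebra.comul (R := k) (A.antipode p h)) := by
    calc
      _ = ∑ i ∈ ρ.index, ∑ j ∈ (α i).index, ∑ r ∈ (δ i).index,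
            gcl (k := k) (G.inv_mul_cancel p (G.inv p)).symm ((δ i).left r)
              ⊗ₜ[k]
            A.mul (G.inv p) (G.mul p (G.inv p)) (A.antipode p ((α i).left j))
                (A.mul p (G.inv p) ((α i).right j) ((δ i).right r)) := by
          refine Finset.sum_congr rfl fun i _ => Finset.sum_congr rfl fun j _ => ?_
          calc
            _ = ∑ n ∈ (π i j).index, ∑ r ∈ (δ i).index,
                  Coalgebra.counit (R := k) ((π i j).right n) •
                    (gcl (k := k) (G.inv_mul_cancel p (G.inv p)).symm ((δ i).left r)
                      ⊗ₜ[k]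
                    A.mul (G.inv p) (G.mul p (G.inv p)) (A.antipode p ((π i j).left n))
                        (A.mul p (G.inv p) ((α i).right j) ((δ i).right r))) := by
                refine Finset.sum_congr rfl fun n _ => ?_
                rw [Finset.sum_comm]
                refine Finset.sum_congr rfl fun r _ => ?_
                rw [← TensorProduct.sum_tmul,
                  aml_sum A p (G.inv p) ((π i j).right n) (ξ i j n) ((δ i).left r),
                  TensorProduct.smul_tmul']
            _ = _ := by
                rw [Finset.sum_comm]
                refine Finset.sum_congr rfl fun r _ => ?_
                have hP := repr_counit_right_smul (π i j)
                calc
                  _ = gcl (k := k) (G.inv_mul_cancel p (G.inv p)).symm ((δ i).left r)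
                        ⊗ₜ[k]
                      A.mul (G.inv p) (G.mul p (G.inv p))
                          (A.antipode p (∑ n ∈ (π i j).index,
                            Coalgebra.counit (R := k) ((π i j).right n) • (π i j).left n))
                          (A.mul p (G.inv p) ((α i).right j) ((δ i).right r)) := by
                      simp only [map_sum, map_smul, LinearMap.sum_apply,
                        LinearMap.smul_apply, TensorProduct.tmul_sum,
                        TensorProduct.tmul_smul]
                  _ = _ := by rw [hP]
      _ = ∑ i ∈ ρ.index, ∑ r ∈ (δ i).index,
            Coalgebra.counit (R := k) (ρ.left i) •
              (gcl (k := k) (G.inv_mul_cancel p (G.inv p)).symm ((δ i).left r)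
                ⊗ₜ[k]
               gcl (k := k) (G.inv_mul_cancel p (G.inv p)).symm ((δ i).right r)) := by
          refine Finset.sum_congr rfl fun i _ => ?_
          rw [Finset.sum_comm]
          refine Finset.sum_congr rfl fun r _ => ?_
          rw [← TensorProduct.tmul_sum,
            aml_sum A p (G.inv p) (ρ.left i) (α i) ((δ i).right r),
            TensorProduct.tmul_smul]
      _ = ∑ i ∈ ρ.index,
            Coalgebra.counit (R := k) (ρ.left i) •
              (TensorProduct.map (gcl (k := k) (G.inv_mul_cancel p (G.inv p)).symm)
                (gcl (k := k) (G.inv_mul_cancel p (G.inv p)).symm)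
                (Coalgebra.comul (R := k) (A.antipode p (ρ.right i)))) := by
          refine Finset.sum_congr rfl fun i _ => ?_
          rw [← Finset.smul_sum, ← (δ i).eq, map_sum]
          simp only [TensorProduct.map_tmul]
      _ = TensorProduct.map (gcl (k := k) (G.inv_mul_cancel p (G.inv p)).symm)
            (gcl (k := k) (G.inv_mul_cancel p (G.inv p)).symm)
            (Coalgebra.comul (R := k) (A.antipode p
              (∑ i ∈ ρ.index, Coalgebra.counit (R := k) (ρ.left i) • ρ.right i))) := by
          simp only [map_sum, map_smul]
      _ = _ := by rw [repr_counit_left_smul ρ]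
  -- Direction 2: the right-hand side collapses to `∑ gcl (S b) ⊗ gcl (S a)`.
  have dir2 :
      (∑ i ∈ ρ.index, ∑ j ∈ (α i).index, ∑ l ∈ (β i).index, ∑ m ∈ (γ i l).index,
          ∑ r ∈ (δT i l).index,
          A.mul (G.inv p) (G.mul p (G.inv p)) (A.antipode p ((α i).right j))
              (A.mul p (G.inv p) ((γ i l).left m) ((δT i l).left r))
            ⊗ₜ[k]
          A.mul (G.inv p) (G.mul p (G.inv p)) (A.antipode p ((α i).left j))
              (A.mul p (G.inv p) ((γ i l).right m) ((δT i l).right r)))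
      = ∑ i ∈ ρ.index,
          gcl (k := k) (G.inv_mul_cancel p (G.inv p)).symm (A.antipode p (ρ.right i))
            ⊗ₜ[k]
          gcl (k := k) (G.inv_mul_cancel p (G.inv p)).symm (A.antipode p (ρ.left i)) := by
    calc
      _ = ∑ i ∈ ρ.index, ∑ j ∈ (α i).index, ∑ l ∈ (β i).index,
            TensorProduct.map
              (A.mul (G.inv p) (G.mul p (G.inv p)) (A.antipode p ((α i).right j)))
              (A.mul (G.inv p) (G.mul p (G.inv p)) (A.antipode p ((α i).left j)))
              (Coalgebra.comul (R := k)
                (A.mul p (G.inv p) ((β i).left l) (A.antipode p ((β i).right l)))) := by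
          refine Finset.sum_congr rfl fun i _ => Finset.sum_congr rfl fun j _ =>
            Finset.sum_congr rfl fun l _ => ?_
          rw [comul_mul_sum A p (G.inv p) ((β i).left l) (A.antipode p ((β i).right l))
            (γ i l) (δT i l)]
          simp only [map_sum, TensorProduct.map_tmul]
      _ = ∑ i ∈ ρ.index, ∑ j ∈ (α i).index,
            Coalgebra.counit (R := k) (ρ.right i) •
              (A.mul (G.inv p) (G.mul p (G.inv p)) (A.antipode p ((α i).right j))
                  (gcl (k := k) (G.mul_inv_self p).symm A.one)
                ⊗ₜ[k]
               A.mul (G.inv p) (G.mul p (G.inv p)) (A.antipode p ((α i).left j))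
                  (gcl (k := k) (G.mul_inv_self p).symm A.one)) := by
          refine Finset.sum_congr rfl fun i _ => Finset.sum_congr rfl fun j _ => ?_
          rw [← map_sum, ← map_sum, mul_antipode_sum A p (ρ.right i) (β i),
            map_smul, map_smul,
            comul_gcl (k := k) (H := H) (G.mul_inv_self p).symm A.one, A.comul_one]
          simp only [TensorProduct.map_tmul]
      _ = ∑ i ∈ ρ.index, ∑ j ∈ (α i).index,
            Coalgebra.counit (R := k) (ρ.right i) •
              (gcl (k := k) (G.inv_mul_cancel p (G.inv p)).symm
                  (A.antipode p ((α i).right j))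
                ⊗ₜ[k]
               gcl (k := k) (G.inv_mul_cancel p (G.inv p)).symm
                  (A.antipode p ((α i).left j))) := by
          refine Finset.sum_congr rfl fun i _ => Finset.sum_congr rfl fun j _ => ?_
          rw [mul_gcl_one, mul_gcl_one]
      _ = ∑ i ∈ ρ.index,
            Coalgebra.counit (R := k) (ρ.right i) •
              (TensorProduct.map
                ((gcl (k := k) (G.inv_mul_cancel p (G.inv p)).symm) ∘ₗ (A.antipode p))
                ((gcl (k := k) (G.inv_mul_cancel p (G.inv p)).symm) ∘ₗ (A.antipode p))
                ((TensorProduct.comm k (H p) (H p))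
                  (Coalgebra.comul (R := k) (ρ.left i)))) := by
          refine Finset.sum_congr rfl fun i _ => ?_
          rw [← (α i).eq]
          simp only [map_sum, TensorProduct.comm_tmul, TensorProduct.map_tmul,
            LinearMap.comp_apply, Finset.smul_sum]
      _ = TensorProduct.map
            ((gcl (k := k) (G.inv_mul_cancel p (G.inv p)).symm) ∘ₗ (A.antipode p))
            ((gcl (k := k) (G.inv_mul_cancel p (G.inv p)).symm) ∘ₗ (A.antipode p))
            ((TensorProduct.comm k (H p) (H p))
              (Coalgebra.comul (R := k)
                (∑ i ∈ ρ.index, Coalgebra.counit (R := k) (ρ.right i) • ρ.left i))) := by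
          simp only [map_sum, map_smul]
      _ = _ := by
          rw [repr_counit_right_smul ρ, ← ρ.eq]
          simp only [map_sum, TensorProduct.comm_tmul, TensorProduct.map_tmul,
            LinearMap.comp_apply]
  have main := dir1.symm.trans (key.trans dir2)
  have main2 := congrArg (TensorProduct.map
    (gcl (k := k) (H := H) (G.inv_mul_cancel p (G.inv p)).symm.symm)
    (gcl (k := k) (H := H) (G.inv_mul_cancel p (G.inv p)).symm.symm)) main
  rw [← LinearMap.comp_apply, ← TensorProduct.map_comp, gcl_symm_comp,
    TensorProduct.map_id, LinearMap.id_apply, map_sum] at main2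
  simp only [TensorProduct.map_tmul, gcl_symm_gcl] at main2
  rw [main2, ← ρ.eq]
  simp only [map_sum, TensorProduct.map_tmul, TensorProduct.comm_tmul]

end AnticomulMain
noncomputable section Bridge4

open TensorProduct Coalgebra

variable {p : Q}

/-- Generalized coassociativity in `H^{⊗4}`: tree `((1,2),(3,4))` vs `(1,((2,3),4))`. -/
lemma bridge4 (h : H p) (ρ : Coalgebra.Repr k h (H p × H p))
    (α : ∀ i, Coalgebra.Repr k (ρ.left i) (H p × H p)) (β : ∀ i, Coalgebra.Repr k (ρ.right i) (H p × H p))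
    (γ : ∀ i l, Coalgebra.Repr k ((β i).left l) (H p × H p)) :
    ∑ i ∈ ρ.index, ∑ j ∈ (α i).index, ∑ l ∈ (β i).index,
        ((α i).left j ⊗ₜ[k] (α i).right j) ⊗ₜ[k] ((β i).left l ⊗ₜ[k] (β i).right l)
      = ∑ i ∈ ρ.index, ∑ l ∈ (β i).index, ∑ m ∈ (γ i l).index,
        (ρ.left i ⊗ₜ[k] (γ i l).left m) ⊗ₜ[k] ((γ i l).right m ⊗ₜ[k] (β i).right l) := by
  classical
  set ζ : ∀ i l, Coalgebra.Repr k ((β i).right l) (H p × H p) :=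
    fun i l => Coalgebra.Repr.arbitrary k _ with hζ
  have step1 :
      (∑ i ∈ ρ.index, ∑ j ∈ (α i).index, ∑ l ∈ (β i).index,
        ((α i).left j ⊗ₜ[k] (α i).right j) ⊗ₜ[k] ((β i).left l ⊗ₜ[k] (β i).right l))
      = ∑ i ∈ ρ.index, ∑ l ∈ (β i).index, ∑ r ∈ (ζ i l).index,
        (ρ.left i ⊗ₜ[k] (β i).left l) ⊗ₜ[k] ((ζ i l).left r ⊗ₜ[k] (ζ i l).right r) := by
    have e := Coalgebra.sum_tmul_tmul_eq ρ α β
    have key := congrArg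
      ((LinearMap.lTensor (H p ⊗[k] H p) (Coalgebra.comul (R := k))) ∘ₗ
        (TensorProduct.assoc k (H p) (H p) (H p)).symm.toLinearMap) e
    simp only [map_sum, LinearMap.comp_apply, LinearEquiv.coe_coe,
      TensorProduct.assoc_symm_tmul, LinearMap.lTensor_tmul] at key
    calc
      _ = ∑ i ∈ ρ.index, ∑ j ∈ (α i).index,
            ((α i).left j ⊗ₜ[k] (α i).right j) ⊗ₜ[k]
              (Coalgebra.comul (R := k) (ρ.right i)) := by
          refine Finset.sum_congr rfl fun i _ => Finset.sum_congr rfl fun j _ => ?_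
          rw [← (β i).eq, TensorProduct.tmul_sum]
      _ = ∑ i ∈ ρ.index, ∑ l ∈ (β i).index,
            (ρ.left i ⊗ₜ[k] (β i).left l) ⊗ₜ[k]
              (Coalgebra.comul (R := k) ((β i).right l)) := key
      _ = _ := by
          refine Finset.sum_congr rfl fun i _ => Finset.sum_congr rfl fun l _ => ?_
          rw [← (ζ i l).eq, TensorProduct.tmul_sum]
  have step2 :
      (∑ i ∈ ρ.index, ∑ l ∈ (β i).index, ∑ r ∈ (ζ i l).index,
        (ρ.left i ⊗ₜ[k] (β i).left l) ⊗ₜ[k] ((ζ i l).left r ⊗ₜ[k] (ζ i l).right r))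
      = ∑ i ∈ ρ.index, ∑ l ∈ (β i).index, ∑ m ∈ (γ i l).index,
        (ρ.left i ⊗ₜ[k] (γ i l).left m) ⊗ₜ[k] ((γ i l).right m ⊗ₜ[k] (β i).right l) := by
    refine Finset.sum_congr rfl fun i _ => ?_
    have e := Coalgebra.sum_tmul_tmul_eq (β i) (γ i) (ζ i)
    have key := congrArg
      (TensorProduct.map (TensorProduct.mk k (H p) (H p) (ρ.left i))
        (LinearMap.id (R := k) (M := H p ⊗[k] H p))) e
    simp only [map_sum, TensorProduct.map_tmul, TensorProduct.mk_apply,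
      LinearMap.id_apply] at key
    exact key.symm
  exact step1.trans step2

end Bridge4
noncomputable section FinalDefs

open TensorProduct Coalgebra

variable (A : GradedHopfQuasigroup k G H) (M N : Q → Type w)
    [∀ q, AddCommGroup (M q)] [∀ q, Module k (M q)]
    [∀ q, AddCommGroup (N q)] [∀ q, Module k (N q)]
    (PM : GradedQuasimodule A M) (PN : GradedQuasimodule A N)

/-- The diagonal action on the tensor product. -/
def actT (p q : Q) : H p →ₗ[k] (M q ⊗[k] N q) →ₗ[k] (M (G.mul p q) ⊗[k] N (G.mul p q)) :=
  (TensorProduct.homTensorHomMap (RingHom.id k) (M q) (N q) (M (G.mul p q)) (N (G.mul p q))) ∘ₗ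
    (TensorProduct.map (PM.act p q) (PN.act p q)) ∘ₗ (Coalgebra.comul (R := k))

lemma actT_tmul (p q : Q) (h : H p) (ρ : Coalgebra.Repr k h (H p × H p)) (m : M q) (n : N q) :
    actT A M N PM PN p q h (m ⊗ₜ[k] n)
      = ∑ i ∈ ρ.index, (PM.act p q (ρ.left i) m) ⊗ₜ[k] (PN.act p q (ρ.right i) n) := by
  rw [actT, LinearMap.comp_apply, LinearMap.comp_apply, ← ρ.eq]
  simp only [map_sum, TensorProduct.map_tmul, LinearMap.sum_apply,
    TensorProduct.homTensorHomMap_apply]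

/-- `actT` by an antipode image, rewritten via anticomultiplicativity. -/
lemma actT_antipode_tmul (p q : Q) (b : H p) (β : Coalgebra.Repr k b (H p × H p)) (m : M q) (n : N q) :
    actT A M N PM PN (G.inv p) q (A.antipode p b) (m ⊗ₜ[k] n)
      = ∑ l ∈ β.index,
          (PM.act (G.inv p) q (A.antipode p (β.right l)) m) ⊗ₜ[k]
          (PN.act (G.inv p) q (A.antipode p (β.left l)) n) := by
  rw [actT, LinearMap.comp_apply, LinearMap.comp_apply, comul_antipode A p b, ← β.eq]
  simp only [map_sum, TensorProduct.comm_tmul, TensorProduct.map_tmul,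
    LinearMap.sum_apply, TensorProduct.homTensorHomMap_apply]

/-- gcl on a tensor-product family acts componentwise. -/
lemma gcl_prod_tmul {p q : Q} (e : p = q) (x : M p) (y : N p) :
    gcl (k := k) (H := fun r => M r ⊗[k] N r) e (x ⊗ₜ[k] y)
      = gcl (k := k) e x ⊗ₜ[k] gcl (k := k) e y := by
  subst e; rfl

/-- The expression map for `quasi_left`:
`(x₁⊗x₂)⊗(x₃⊗x₄) ↦ x₁·(S x₄·m) ⊗ x₂·(S x₃·n)`. -/
def XiL (p q : Q) (m : M q) (n : N q) :
    (H p ⊗[k] H p) ⊗[k] (H p ⊗[k] H p) →ₗ[k]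
      M (G.mul p (G.mul (G.inv p) q)) ⊗[k] N (G.mul p (G.mul (G.inv p) q)) :=
  (TensorProduct.map (TensorProduct.lift (PM.act p (G.mul (G.inv p) q)))
      (TensorProduct.lift (PN.act p (G.mul (G.inv p) q)))) ∘ₗ
    (TensorProduct.tensorTensorTensorComm k (H p) (H p)
      (M (G.mul (G.inv p) q)) (N (G.mul (G.inv p) q))).toLinearMap ∘ₗ
    (LinearMap.lTensor (H p ⊗[k] H p)
      ((TensorProduct.map
          (((PM.act (G.inv p) q).flip m) ∘ₗ (A.antipode p))
          (((PN.act (G.inv p) q).flip n) ∘ₗ (A.antipode p))) ∘ₗ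
        (TensorProduct.comm k (H p) (H p)).toLinearMap))

lemma XiL_tmul (p q : Q) (m : M q) (n : N q) (x₁ x₂ x₃ x₄ : H p) :
    XiL A M N PM PN p q m n ((x₁ ⊗ₜ[k] x₂) ⊗ₜ[k] (x₃ ⊗ₜ[k] x₄))
      = (PM.act p (G.mul (G.inv p) q) x₁ (PM.act (G.inv p) q (A.antipode p x₄) m))
          ⊗ₜ[k]
        (PN.act p (G.mul (G.inv p) q) x₂ (PN.act (G.inv p) q (A.antipode p x₃) n)) := by
  simp [XiL, TensorProduct.tensorTensorTensorComm_tmul]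

/-- The expression map for `quasi_left'`:
`(x₁⊗x₂)⊗(x₃⊗x₄) ↦ S(x₂)·(x₃·m) ⊗ S(x₁)·(x₄·n)`. -/
def XiR (p q : Q) (m : M q) (n : N q) :
    (H p ⊗[k] H p) ⊗[k] (H p ⊗[k] H p) →ₗ[k]
      M (G.mul (G.inv p) (G.mul p q)) ⊗[k] N (G.mul (G.inv p) (G.mul p q)) :=
  (TensorProduct.map (TensorProduct.lift (PM.act (G.inv p) (G.mul p q)))
      (TensorProduct.lift (PN.act (G.inv p) (G.mul p q)))) ∘ₗ
    (TensorProduct.tensorTensorTensorComm k (H (G.inv p)) (H (G.inv p))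
      (M (G.mul p q)) (N (G.mul p q))).toLinearMap ∘ₗ
    (TensorProduct.map
      ((TensorProduct.map (A.antipode p) (A.antipode p)) ∘ₗ
        (TensorProduct.comm k (H p) (H p)).toLinearMap)
      (TensorProduct.map ((PM.act p q).flip m) ((PN.act p q).flip n)))

lemma XiR_tmul (p q : Q) (m : M q) (n : N q) (x₁ x₂ x₃ x₄ : H p) :
    XiR A M N PM PN p q m n ((x₁ ⊗ₜ[k] x₂) ⊗ₜ[k] (x₃ ⊗ₜ[k] x₄))
      = (PM.act (G.inv p) (G.mul p q) (A.antipode p x₂) (PM.act p q x₃ m))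
          ⊗ₜ[k]
        (PN.act (G.inv p) (G.mul p q) (A.antipode p x₁) (PN.act p q x₄ n)) := by
  simp [XiR, TensorProduct.tensorTensorTensorComm_tmul]

end FinalDefs
noncomputable section FinalLemmas

open TensorProduct Coalgebra

variable (A : GradedHopfQuasigroup k G H) (M N : Q → Type w)
    [∀ q, AddCommGroup (M q)] [∀ q, Module k (M q)]
    [∀ q, AddCommGroup (N q)] [∀ q, Module k (N q)]
    (PM : GradedQuasimodule A M) (PN : GradedQuasimodule A N)

lemma actT_quasi_left (p q : Q) (h : H p) (X : M q ⊗[k] N q) :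
    TensorProduct.lift ((actT A M N PM PN p (G.mul (G.inv p) q)).compl₂
        (((actT A M N PM PN (G.inv p) q).flip X).comp (A.antipode p)))
        (Coalgebra.comul h)
      = gcl (k := k) (H := fun r => M r ⊗[k] N r) (G.mul_inv_cancel_left p q).symm
          (Coalgebra.counit (R := k) h • X) := by
  classical
  set ρ := Coalgebra.Repr.arbitrary k h with hρ
  have lhs_eq :
      TensorProduct.lift ((actT A M N PM PN p (G.mul (G.inv p) q)).compl₂
        (((actT A M N PM PN (G.inv p) q).flip X).comp (A.antipode p)))
        (Coalgebra.comul h)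
      = ∑ i ∈ ρ.index, actT A M N PM PN p (G.mul (G.inv p) q) (ρ.left i)
          (actT A M N PM PN (G.inv p) q (A.antipode p (ρ.right i)) X) := by
    rw [← ρ.eq]
    simp only [map_sum, TensorProduct.lift.tmul, LinearMap.compl₂_apply,
      LinearMap.comp_apply, LinearMap.flip_apply]
  rw [lhs_eq, map_smul]
  clear lhs_eq
  induction X using TensorProduct.induction_on with
  | zero => simp
  | add x y hx hy =>
      simp only [map_add, Finset.sum_add_distrib, smul_add] at hx hy ⊢
      rw [hx, hy]
  | tmul m n =>
      set α : ∀ i, Coalgebra.Repr k (ρ.left i) (H p × H p) :=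
        fun i => Coalgebra.Repr.arbitrary k _ with hα
      set β : ∀ i, Coalgebra.Repr k (ρ.right i) (H p × H p) :=
        fun i => Coalgebra.Repr.arbitrary k _ with hβ
      set γ : ∀ i l, Coalgebra.Repr k ((β i).left l) (H p × H p) :=
        fun i l => Coalgebra.Repr.arbitrary k _ with hγ
      have key := congrArg (XiL A M N PM PN p q m n) (bridge4 h ρ α β γ)
      simp only [map_sum, XiL_tmul] at key
      calc
        _ = ∑ i ∈ ρ.index, ∑ j ∈ (α i).index, ∑ l ∈ (β i).index,
              (PM.act p (G.mul (G.inv p) q) ((α i).left j)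
                  (PM.act (G.inv p) q (A.antipode p ((β i).right l)) m))
                ⊗ₜ[k]
              (PN.act p (G.mul (G.inv p) q) ((α i).right j)
                  (PN.act (G.inv p) q (A.antipode p ((β i).left l)) n)) := by
            refine Finset.sum_congr rfl fun i _ => ?_
            rw [actT_antipode_tmul A M N PM PN p q (ρ.right i) (β i) m n, map_sum,
              Finset.sum_comm]
            exact Finset.sum_congr rfl fun l _ =>
              actT_tmul A M N PM PN p (G.mul (G.inv p) q) (ρ.left i) (α i) _ _
        _ = ∑ i ∈ ρ.index, ∑ l ∈ (β i).index, ∑ r ∈ (γ i l).index,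
              (PM.act p (G.mul (G.inv p) q) (ρ.left i)
                  (PM.act (G.inv p) q (A.antipode p ((β i).right l)) m))
                ⊗ₜ[k]
              (PN.act p (G.mul (G.inv p) q) ((γ i l).left r)
                  (PN.act (G.inv p) q (A.antipode p ((γ i l).right r)) n)) := key
        _ = ∑ i ∈ ρ.index, ∑ l ∈ (β i).index,
              Coalgebra.counit (R := k) ((β i).left l) •
                ((PM.act p (G.mul (G.inv p) q) (ρ.left i)
                    (PM.act (G.inv p) q (A.antipode p ((β i).right l)) m))
                  ⊗ₜ[k]
                 gcl (k := k) (G.mul_inv_cancel_left p q).symm n) := by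
            refine Finset.sum_congr rfl fun i _ => Finset.sum_congr rfl fun l _ => ?_
            rw [← TensorProduct.tmul_sum,
              ql_sum PN p q ((β i).left l) (γ i l) n, TensorProduct.tmul_smul]
        _ = ∑ i ∈ ρ.index,
              (PM.act p (G.mul (G.inv p) q) (ρ.left i)
                  (PM.act (G.inv p) q (A.antipode p (ρ.right i)) m))
                ⊗ₜ[k]
              gcl (k := k) (G.mul_inv_cancel_left p q).symm n := by
            refine Finset.sum_congr rfl fun i _ => ?_
            calc
              _ = (PM.act p (G.mul (G.inv p) q) (ρ.left i)
                    (PM.act (G.inv p) q (A.antipode p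
                      (∑ l ∈ (β i).index,
                        Coalgebra.counit (R := k) ((β i).left l) • (β i).right l)) m))
                  ⊗ₜ[k]
                  gcl (k := k) (G.mul_inv_cancel_left p q).symm n := by
                simp only [map_sum, map_smul, LinearMap.sum_apply, LinearMap.smul_apply,
                  TensorProduct.sum_tmul, TensorProduct.smul_tmul']
              _ = _ := by rw [repr_counit_left_smul (β i)]
        _ = _ := by
            rw [← TensorProduct.sum_tmul, ql_sum PM p q h ρ m,
              ← TensorProduct.smul_tmul',
              gcl_prod_tmul M N (G.mul_inv_cancel_left p q).symm m n]

end FinalLemmas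
noncomputable section FinalLemmas2

open TensorProduct Coalgebra

variable (A : GradedHopfQuasigroup k G H) (M N : Q → Type w)
    [∀ q, AddCommGroup (M q)] [∀ q, Module k (M q)]
    [∀ q, AddCommGroup (N q)] [∀ q, Module k (N q)]
    (PM : GradedQuasimodule A M) (PN : GradedQuasimodule A N)

lemma actT_quasi_left' (p q : Q) (h : H p) (X : M q ⊗[k] N q) :
    TensorProduct.lift (((actT A M N PM PN (G.inv p) (G.mul p q)).comp
        (A.antipode p)).compl₂ ((actT A M N PM PN p q).flip X)) (Coalgebra.comul h)
      = gcl (k := k) (H := fun r => M r ⊗[k] N r) (G.inv_mul_cancel p q).symm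
          (Coalgebra.counit (R := k) h • X) := by
  classical
  set ρ := Coalgebra.Repr.arbitrary k h with hρ
  have lhs_eq :
      TensorProduct.lift (((actT A M N PM PN (G.inv p) (G.mul p q)).comp
        (A.antipode p)).compl₂ ((actT A M N PM PN p q).flip X)) (Coalgebra.comul h)
      = ∑ i ∈ ρ.index, actT A M N PM PN (G.inv p) (G.mul p q) (A.antipode p (ρ.left i))
          (actT A M N PM PN p q (ρ.right i) X) := by
    rw [← ρ.eq]
    simp only [map_sum, TensorProduct.lift.tmul, LinearMap.compl₂_apply,
      LinearMap.comp_apply, LinearMap.flip_apply]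
  rw [lhs_eq, map_smul]
  clear lhs_eq
  induction X using TensorProduct.induction_on with
  | zero => simp
  | add x y hx hy =>
      simp only [map_add, Finset.sum_add_distrib, smul_add] at hx hy ⊢
      rw [hx, hy]
  | tmul m n =>
      set α : ∀ i, Coalgebra.Repr k (ρ.left i) (H p × H p) :=
        fun i => Coalgebra.Repr.arbitrary k _ with hα
      set β : ∀ i, Coalgebra.Repr k (ρ.right i) (H p × H p) :=
        fun i => Coalgebra.Repr.arbitrary k _ with hβ
      set γ : ∀ i l, Coalgebra.Repr k ((β i).left l) (H p × H p) :=
        fun i l => Coalgebra.Repr.arbitrary k _ with hγ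
      have key := congrArg (XiR A M N PM PN p q m n) (bridge4 h ρ α β γ)
      simp only [map_sum, XiR_tmul] at key
      calc
        _ = ∑ i ∈ ρ.index, ∑ j ∈ (α i).index, ∑ l ∈ (β i).index,
              (PM.act (G.inv p) (G.mul p q) (A.antipode p ((α i).right j))
                  (PM.act p q ((β i).left l) m))
                ⊗ₜ[k]
              (PN.act (G.inv p) (G.mul p q) (A.antipode p ((α i).left j))
                  (PN.act p q ((β i).right l) n)) := by
            refine Finset.sum_congr rfl fun i _ => ?_
            rw [actT_tmul A M N PM PN p q (ρ.right i) (β i) m n, map_sum,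
              Finset.sum_comm]
            exact Finset.sum_congr rfl fun l _ =>
              actT_antipode_tmul A M N PM PN p (G.mul p q) (ρ.left i) (α i) _ _
        _ = ∑ i ∈ ρ.index, ∑ l ∈ (β i).index, ∑ r ∈ (γ i l).index,
              (PM.act (G.inv p) (G.mul p q) (A.antipode p ((γ i l).left r))
                  (PM.act p q ((γ i l).right r) m))
                ⊗ₜ[k]
              (PN.act (G.inv p) (G.mul p q) (A.antipode p (ρ.left i))
                  (PN.act p q ((β i).right l) n)) := key
        _ = ∑ i ∈ ρ.index, ∑ l ∈ (β i).index,
              Coalgebra.counit (R := k) ((β i).left l) •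
                (gcl (k := k) (G.inv_mul_cancel p q).symm m
                  ⊗ₜ[k]
                 (PN.act (G.inv p) (G.mul p q) (A.antipode p (ρ.left i))
                    (PN.act p q ((β i).right l) n))) := by
            refine Finset.sum_congr rfl fun i _ => Finset.sum_congr rfl fun l _ => ?_
            rw [← TensorProduct.sum_tmul,
              ql'_sum PM p q ((β i).left l) (γ i l) m, TensorProduct.smul_tmul',
              TensorProduct.smul_tmul]
        _ = ∑ i ∈ ρ.index,
              gcl (k := k) (G.inv_mul_cancel p q).symm m
                ⊗ₜ[k]
              (PN.act (G.inv p) (G.mul p q) (A.antipode p (ρ.left i))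
                  (PN.act p q (ρ.right i) n)) := by
            refine Finset.sum_congr rfl fun i _ => ?_
            calc
              _ = gcl (k := k) (G.inv_mul_cancel p q).symm m
                    ⊗ₜ[k]
                  (PN.act (G.inv p) (G.mul p q) (A.antipode p (ρ.left i))
                    (PN.act p q
                      (∑ l ∈ (β i).index,
                        Coalgebra.counit (R := k) ((β i).left l) • (β i).right l) n)) := by
                simp only [map_sum, map_smul, LinearMap.sum_apply, LinearMap.smul_apply,
                  TensorProduct.tmul_sum, TensorProduct.tmul_smul]
              _ = _ := by rw [repr_counit_left_smul (β i)]
        _ = _ := by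
            rw [← TensorProduct.tmul_sum, ql'_sum PN p q h ρ n,
              TensorProduct.tmul_smul,
              gcl_prod_tmul M N (G.inv_mul_cancel p q).symm m n]

end FinalLemmas2
noncomputable section FinalLemmas3

open TensorProduct Coalgebra

variable (A : GradedHopfQuasigroup k G H) (M N : Q → Type w)
    [∀ q, AddCommGroup (M q)] [∀ q, Module k (M q)]
    [∀ q, AddCommGroup (N q)] [∀ q, Module k (N q)]
    (PM : GradedQuasimodule A M) (PN : GradedQuasimodule A N)

lemma actT_one_act (q : Q) (X : M q ⊗[k] N q) :
    gcl (k := k) (H := fun r => M r ⊗[k] N r) (G.one_mul q)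
      (actT A M N PM PN G.one q A.one X) = X := by
  induction X using TensorProduct.induction_on with
  | zero => simp
  | add x y hx hy => simp only [map_add]; rw [hx, hy]
  | tmul m n =>
      have h1 : actT A M N PM PN G.one q A.one (m ⊗ₜ[k] n)
          = (PM.act G.one q A.one m) ⊗ₜ[k] (PN.act G.one q A.one n) := by
        rw [actT, LinearMap.comp_apply, LinearMap.comp_apply, A.comul_one]
        simp [TensorProduct.homTensorHomMap_apply]
      rw [h1, gcl_prod_tmul M N (G.one_mul q), PM.one_act, PN.one_act]

end FinalLemmas3

/-- The tensor product of two graded quasimodules with the diagonal action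
is again a graded quasimodule. -/
theorem gradedQuasimodule_tensor (A : GradedHopfQuasigroup k G H)
    (M N : Q → Type w)
    [∀ q, AddCommGroup (M q)] [∀ q, Module k (M q)]
    [∀ q, AddCommGroup (N q)] [∀ q, Module k (N q)]
    (PM : GradedQuasimodule A M) (PN : GradedQuasimodule A N) :
    ∃ P : GradedQuasimodule A (fun q => M q ⊗[k] N q),
      ∀ (p q : Q) (h : H p) (m : M q) (n : N q),
        (P.act p q h) (m ⊗ₜ[k] n)
          = TensorProduct.map ((PM.act p q).flip m) ((PN.act p q).flip n)
              (Coalgebra.comul (R := k) h) := by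
  refine ⟨⟨fun p q => actT A M N PM PN p q, actT_one_act A M N PM PN,
    actT_quasi_left A M N PM PN, actT_quasi_left' A M N PM PN⟩, ?_⟩
  intro p q h m n
  show actT A M N PM PN p q h (m ⊗ₜ[k] n) = _
  rw [actT_tmul A M N PM PN p q h (Coalgebra.Repr.arbitrary k h) m n,
    ← (Coalgebra.Repr.arbitrary k h).eq]
  simp only [map_sum, TensorProduct.map_tmul, LinearMap.flip_apply]
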